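/- Let R ⊆ L satisfy (GR1), fix δ_0 in the kernel of the bilinear form restricted to ℂR, and for α ∈ R define F(α) = {c ∈ ℂ : α + c δ_0 ∈ R}. If α ∈ R is nonisotropic and F(α) is contained in ℤa for some a ∈ ℂ, then F(α) is a subgroup of (ℂ, +); moreover, for every γ ∈ R one has ⟨γ, α^∨⟩·F(α) ⊆ F(γ), where ⟨γ, α^∨⟩ = 2(γ,α)/(α,α). -/

import Mathlib

lemma int_closure_add (S : Set ℤ) (h0 : (0:ℤ) ∈ S)
    (hneg : ∀ m ∈ S, -m ∈ S)
    (hT : ∀ m ∈ S, ∀ n ∈ S, n + 2*m ∈ S) :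
    ∀ m ∈ S, ∀ n ∈ S, m + n ∈ S := by
  -- multiples of an element of S lie in S
  have hmulN : ∀ g ∈ S, ∀ k : ℕ, (k:ℤ)*g ∈ S ∧ ((k:ℤ)+1)*g ∈ S := by
    intro g hg k
    induction k with
    | zero => simpa using ⟨h0, hg⟩
    | succ k ih =>
      refine ⟨by push_cast; exact ih.2, ?_⟩
      have := hT g hg _ ih.1
      have he : ((k:ℤ))*g + 2*g = ((k:ℤ)+1+1)*g := by ring
      rw [he] at this
      push_cast
      exact this
  have hmul : ∀ g ∈ S, ∀ k : ℤ, k*g ∈ S := by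
    intro g hg k
    rcases le_or_gt 0 k with hk | hk
    · lift k to ℕ using hk; exact (hmulN g hg k).1
    · have : (-k).toNat * g ∈ S := (hmulN g hg (-k).toNat).1
      have h2 : ((-k).toNat : ℤ) = -k := Int.toNat_of_nonneg (by omega)
      rw [h2] at this
      have := hneg _ this
      simpa using this
  -- translation by twice a multiple
  have htrans : ∀ g ∈ S, ∀ s ∈ S, ∀ k : ℤ, s + 2*(k*g) ∈ S :=
    fun g hg s hs k => hT (k*g) (hmul g hg k) s hs
  -- divisibility by the least positive element
  have hdvd : ∀ g : ℤ, 0 < g → g ∈ S → (∀ x : ℤ, 0 < x → x ∈ S → g ≤ x) →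
      ∀ s ∈ S, g ∣ s := by
    intro g hgpos hg hmin s hs
    set r := s % (2*g) with hr
    have h2g : (0:ℤ) < 2*g := by omega
    have hrS : r ∈ S := by
      have := htrans g hg s hs (-(s / (2*g)))
      have he : s + 2*(-(s / (2*g))*g) = s % (2*g) := by
        rw [Int.emod_def]; ring
      rw [he] at this; exact this
    have hr0 : 0 ≤ r := Int.emod_nonneg s (by omega)
    have hrlt : r < 2*g := Int.emod_lt_of_pos s h2g
    have hdg : g ∣ r := by
      rcases eq_or_lt_of_le hr0 with h | hrpos
      · exact ⟨0, by omega⟩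
      have hge : g ≤ r := hmin r hrpos hrS
      rcases eq_or_lt_of_le hge with h | hgr
      · exact ⟨1, by omega⟩
      · exfalso
        have htS : -r + 2*g ∈ S := hT g hg _ (hneg r hrS)
        have := hmin _ (by omega) htS
        omega
      -- r = 0 handled
    have h2 : g ∣ 2*g * (s / (2*g)) := ⟨2 * (s / (2*g)), by ring⟩
    have hse : s = s % (2*g) + 2*g * (s / (2*g)) := by
      have := Int.emod_add_mul_ediv s (2*g); omega
    rw [hse]
    exact dvd_add hdg h2
  -- main
  intro m hm n hn
  by_cases hm0 : m = 0
  · simpa [hm0] using hn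
  -- least positive element
  have hA : ∃ k : ℕ, 0 < k ∧ (k:ℤ) ∈ S := by
    refine ⟨m.natAbs, by omega, ?_⟩
    rcases Int.natAbs_eq m with h | h
    · rw [← h]; exact hm
    · have := hneg m hm; rw [h] at this; simpa using this
  classical
  set g := Nat.find hA with hgdef
  obtain ⟨hgpos, hgS⟩ := Nat.find_spec hA
  have hmin : ∀ x : ℤ, 0 < x → x ∈ S → (g:ℤ) ≤ x := by
    intro x hx hxS
    have : g ≤ x.toNat := Nat.find_min' hA ⟨by omega, by rw [Int.toNat_of_nonneg (by omega)]; exact hxS⟩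
    omega
  obtain ⟨p, hp⟩ := hdvd g (by exact_mod_cast hgpos) hgS hmin m hm
  obtain ⟨q, hq⟩ := hdvd g (by exact_mod_cast hgpos) hgS hmin n hn
  have : m + n = (p+q) * (g:ℤ) := by rw [hp, hq]; ring
  rw [this]
  exact hmul _ hgS (p+q)


/-- The reflection `s_α(v) = v − (2(v,α)/(α,α)) α` attached to a bilinear form. -/
noncomputable def sRefl {V : Type*} [AddCommGroup V] [Module ℂ V]
    (B : V → V → ℂ) (α v : V) : V :=
  v - (2 * B v α / B α α) • α

/-- Let `R ⊆ L` satisfy (GR1), fix `δ₀` in the kernel of the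
form restricted to `ℂR`, and define `F(α) = {c ∈ ℂ : α + c δ₀ ∈ R}`.  If
`α ∈ R` is anisotropic and `F(α) ⊆ ℤa` for some `a ∈ ℂ`, then `F(α)` is a
subgroup of `(ℂ, +)`, and for every `γ ∈ R`, `⟨γ, α^∨⟩ · F(α) ⊆ F(γ)`. -/
theorem stmt_5
    (V : Type*) [AddCommGroup V] [Module ℂ V]
    (B : V → V → ℂ)
    (hB1 : ∀ x : V, IsLinearMap ℂ (B x))
    (hB2 : ∀ y : V, IsLinearMap ℂ (fun x => B x y))
    (hsymm : ∀ x y : V, B x y = B y x)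
    (R : Set V)
    (hneg : ∀ v ∈ R, -v ∈ R)
    -- (GR1)
    (hint : ∀ α ∈ R, ∀ β ∈ R, B α α ≠ 0 → ∃ m : ℤ, 2 * B β α = (m : ℂ) * B α α)
    (hrefl : ∀ α ∈ R, ∀ β ∈ R, B α α ≠ 0 → sRefl B α β ∈ R)
    -- δ₀ lies in the kernel of the form restricted to the span of R
    (δ₀ : V) (hδ₀span : δ₀ ∈ Submodule.span ℂ R) (hδ₀ : ∀ γ ∈ R, B δ₀ γ = 0)
    (α : V) (hα : α ∈ R) (hαan : B α α ≠ 0)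
    -- discreteness: F(α) ⊆ ℤ a
    (a : ℂ) (hdisc : ∀ c : ℂ, α + c • δ₀ ∈ R → ∃ m : ℤ, c = (m : ℂ) * a) :
    (∃ H : AddSubgroup ℂ, (H : Set ℂ) = {c : ℂ | α + c • δ₀ ∈ R}) ∧
    (∀ γ ∈ R, ∀ c : ℂ, α + c • δ₀ ∈ R →
      γ + ((2 * B γ α / B α α) * c) • δ₀ ∈ R) := by
  classical
  -- bilinearity rewrite rules
  have hadd₁ : ∀ x y z : V, B x (y + z) = B x y + B x z := fun x y z => (hB1 x).map_add y z
  have hsmul₁ : ∀ (x : V) (t : ℂ) (z : V), B x (t • z) = t * B x z := fun x t z => (hB1 x).map_smul t z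
  have hadd₂ : ∀ x y z : V, B (x + y) z = B x z + B y z := fun x y z => (hB2 z).map_add x y
  have hsmul₂ : ∀ (t : ℂ) (x z : V), B (t • x) z = t * B x z := fun t x z => (hB2 z).map_smul t x
  have hsub₂ : ∀ x y z : V, B (x - y) z = B x z - B y z := fun x y z => (hB2 z).map_sub x y
  have hδα : B δ₀ α = 0 := hδ₀ α hα
  have hαδ : B α δ₀ = 0 := by rw [hsymm]; exact hδα
  have hδδ : B δ₀ δ₀ = 0 := by
    have hall : ∀ v ∈ Submodule.span ℂ R, B δ₀ v = 0 := by
      intro v hv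
      induction hv using Submodule.span_induction with
      | mem x hx => exact hδ₀ x hx
      | zero => exact (hB1 δ₀).map_zero
      | add x y _ _ hx hy => rw [hadd₁, hx, hy, add_zero]
      | smul t x _ hx => rw [hsmul₁, hx, mul_zero]
    exact hall δ₀ hδ₀span
  -- the key reflection computation (this is the second statement)
  have key : ∀ γ ∈ R, ∀ c : ℂ, α + c • δ₀ ∈ R →
      γ + ((2 * B γ α / B α α) * c) • δ₀ ∈ R := by
    intro γ hγ c hc
    set k := 2 * B γ α / B α α with hk
    have hγδ : B γ δ₀ = 0 := by rw [hsymm]; exact hδ₀ γ hγ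
    set β := α + c • δ₀ with hβ
    have hβα : B β α = B α α := by rw [hβ, hadd₂, hsmul₂, hδα]; ring
    have hββ : B β β = B α α := by
      rw [hβ, hadd₁, hsmul₁, hadd₂, hadd₂, hsmul₂, hsmul₂, hαδ, hδα, hδδ]; ring
    have hβan : B β β ≠ 0 := by rw [hββ]; exact hαan
    have h1 : sRefl B α γ ∈ R := hrefl α hα γ hγ hαan
    have h2 : sRefl B β (sRefl B α γ) ∈ R := hrefl β hc _ h1 hβan
    have hkeq : k * B α α = 2 * B γ α := by rw [hk]; field_simp
    have hcoef : 2 * B (sRefl B α γ) β / B β β = -k := by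
      rw [hββ, sRefl, hsub₂, hsmul₂]
      rw [hβ, hadd₁, hadd₁, hsmul₁, hsmul₁, hγδ, hαδ, hk]
      field_simp
      ring
    have heq : sRefl B β (sRefl B α γ) = γ + (k * c) • δ₀ := by
      rw [sRefl, hcoef, sRefl, hβ]
      module
    rw [heq] at h2
    exact h2
  refine ⟨?_, key⟩
  -- F(α) contains 0
  have h0F : α + (0:ℂ) • δ₀ ∈ R := by simpa using hα
  -- closed under negation
  have hnegF : ∀ c : ℂ, α + c • δ₀ ∈ R → α + (-c) • δ₀ ∈ R := by
    intro c hc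
    have hβ : -(α + c • δ₀) ∈ R := hneg _ hc
    have h1 : sRefl B α (-(α + c • δ₀)) ∈ R := hrefl α hα _ hβ hαan
    have hBv : B (-(α + c • δ₀)) α = -(B α α) := by
      have : B (-(α + c • δ₀)) α = B (0 - (α + c • δ₀)) α := by rw [zero_sub]
      rw [this, hsub₂, hadd₂, hsmul₂, hδα, (hB2 α).map_zero]; ring
    have hcoef : 2 * B (-(α + c • δ₀)) α / B α α = -2 := by
      rw [hBv]; field_simp
    have heq : sRefl B α (-(α + c • δ₀)) = α + (-c) • δ₀ := by
      rw [sRefl, hcoef]; module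
    rw [heq] at h1; exact h1
  -- closed under (c, d) ↦ d + 2c
  have hTF : ∀ c : ℂ, α + c • δ₀ ∈ R → ∀ d : ℂ, α + d • δ₀ ∈ R →
      α + (d + 2*c) • δ₀ ∈ R := by
    intro c hc d hd
    have hγα : B (α + d • δ₀) α = B α α := by rw [hadd₂, hsmul₂, hδα]; ring
    have := key (α + d • δ₀) hd c hc
    have hcoef : 2 * B (α + d • δ₀) α / B α α = 2 := by
      rw [hγα]; field_simp
    rw [hcoef] at this
    have heq : α + d • δ₀ + (2 * c) • δ₀ = α + (d + 2*c) • δ₀ := by module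
    rw [heq] at this; exact this
  -- the set of integers m with m•a ∈ F(α)
  set S : Set ℤ := {m : ℤ | α + ((m : ℂ) * a) • δ₀ ∈ R} with hS
  have hS0 : (0:ℤ) ∈ S := by simpa [hS] using h0F
  have hSneg : ∀ m ∈ S, -m ∈ S := by
    intro m hm
    have := hnegF _ hm
    simpa [hS, neg_mul] using this
  have hST : ∀ m ∈ S, ∀ n ∈ S, n + 2*m ∈ S := by
    intro m hm n hn
    have := hTF _ hm _ hn
    have he : ((n : ℂ) * a + 2 * ((m:ℂ) * a)) = (((n + 2*m : ℤ) : ℂ) * a) := by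
      push_cast; ring
    rw [he] at this
    exact this
  have hSadd := int_closure_add S hS0 hSneg hST
  refine ⟨{
    carrier := {c : ℂ | α + c • δ₀ ∈ R}
    zero_mem' := h0F
    neg_mem' := fun {c} hc => hnegF c hc
    add_mem' := ?_ }, rfl⟩
  intro c d hc hd
  obtain ⟨m, hm⟩ := hdisc c hc
  obtain ⟨n, hn⟩ := hdisc d hd
  have hmS : m ∈ S := by rw [hS]; simpa [← hm] using hc
  have hnS : n ∈ S := by rw [hS]; simpa [← hn] using hd
  have := hSadd m hmS n hnS
  rw [hS] at this
  simp only [Set.mem_setOf_eq] at this ⊢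
  have he : ((m + n : ℤ) : ℂ) * a = c + d := by rw [hm, hn]; push_cast; ring
  rw [he] at this
  exact this
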